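/- Let V be a finite-dimensional real normed vector space, A : V →L[ℝ] V a continuous linear endomorphism, and G a subgroup of the group of linear automorphisms of V. Assume that for every t ∈ ℝ there exists g ∈ G that acts on V as the operator exponential exp(t • A). Let s be a nonempty finite set of real numbers, for each θ ∈ s let v(θ) ∈ V satisfy A(v(θ)) = θ • v(θ), let θmax be the maximum of s, assume v(θmax) ≠ 0, and set v = ∑_{θ ∈ s} v(θ). Define the punctured cone over the projective orbit of v as C = {c • (g v) | g ∈ G, c ∈ ℝ, c ≠ 0}. If C is a closed subset of V \ {0} (in the subspace topology), then v(θmax) ∈ C; that is, there exist g ∈ G and c ≠ 0 with c • (g v) = v(θmax). -/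

import Mathlib

open Nat NormedSpace in
lemma aux_exp_eigen {V : Type*} [NormedAddCommGroup V] [NormedSpace ℝ V] [CompleteSpace V]
    (B : V →L[ℝ] V) (a : ℝ) (u : V) (h : B u = a • u) :
    NormedSpace.exp B u = Real.exp a • u := by
  have hpow : ∀ n : ℕ, (B ^ n) u = a ^ n • u := by
    intro n
    induction n with
    | zero => simp
    | succ n ih =>
      rw [pow_succ, pow_succ, ContinuousLinearMap.mul_apply, h, map_smul, ih, smul_smul,
        mul_comm]
  have hsum : Summable fun n : ℕ => ((n ! : ℝ))⁻¹ • B ^ n := expSeries_summable' B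
  have h1 : NormedSpace.exp B u = ∑' n : ℕ, (((n ! : ℝ))⁻¹ • B ^ n) u := by
    rw [exp_eq_tsum ℝ]
    exact ((ContinuousLinearMap.apply ℝ V u).map_tsum hsum)
  rw [h1]
  have h2 : ∀ n : ℕ, (((n ! : ℝ))⁻¹ • B ^ n) u = (((n ! : ℝ))⁻¹ * a ^ n) • u := by
    intro n
    rw [ContinuousLinearMap.smul_apply, hpow, smul_smul]
  simp_rw [h2]
  rw [Summable.tsum_smul_const]
  · congr 1
    rw [Real.exp_eq_exp_ℝ, exp_eq_tsum ℝ]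
    simp_rw [smul_eq_mul]
  · simpa [smul_eq_mul] using expSeries_summable' (𝕂 := ℝ) a

/-- **Theorem 2.5** (for linear group actions, in terms of the punctured cone over the
projective orbit): let `V` be a finite-dimensional real normed vector space, `A` a
continuous linear endomorphism of `V`, and `G` a subgroup of the linear automorphism group
of `V` containing the one-parameter flow `exp(t • A)`. Let `w = ∑_{θ ∈ s} v θ` where each
`v θ` satisfies `A (v θ) = θ • v θ`, let `θmax = max s`, and assume `v θmax ≠ 0`. If the
punctured cone `C = {c • (g w) | g ∈ G, c ≠ 0}` over the projective orbit of `w` is closed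
in `V \ {0}` (subspace topology), then `v θmax ∈ C`: there exist `g ∈ G` and `c ≠ 0` with
`c • (g w) = v θmax`. -/
theorem closed_projective_orbit_contains_top_eigenvector
    (V : Type*) [NormedAddCommGroup V] [NormedSpace ℝ V] [FiniteDimensional ℝ V]
    (A : V →L[ℝ] V) (G : Subgroup (V ≃ₗ[ℝ] V))
    (hflow : ∀ t : ℝ, ∃ g ∈ G, ∀ u : V, g u = (NormedSpace.exp (t • A)) u)
    (s : Finset ℝ) (hs : s.Nonempty) (v : ℝ → V)
    (hv : ∀ θ ∈ s, A (v θ) = θ • v θ)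
    (θmax : ℝ) (hθmax : θmax = s.max' hs) (hvmax : v θmax ≠ 0)
    (w : V) (hw : w = ∑ θ ∈ s, v θ)
    (C : Set V) (hC : C = {u : V | ∃ g ∈ G, ∃ c : ℝ, c ≠ 0 ∧ c • (g w) = u})
    (hclosed : IsClosed ((fun x : {u : V // u ≠ 0} => (x : V)) ⁻¹' C)) :
    ∃ g ∈ G, ∃ c : ℝ, c ≠ 0 ∧ c • (g w) = v θmax := by
  have hmem : θmax ∈ s := hθmax ▸ s.max'_mem hs
  have hle : ∀ θ ∈ s, θ ≤ θmax := fun θ hθ => hθmax ▸ s.le_max' θ hθ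
  have hexp : ∀ t : ℝ, NormedSpace.exp (t • A) w = ∑ θ ∈ s, Real.exp (t * θ) • v θ := by
    intro t
    rw [hw, map_sum]
    refine Finset.sum_congr rfl fun θ hθ => ?_
    exact aux_exp_eigen (t • A) (t * θ) (v θ)
      (by rw [ContinuousLinearMap.smul_apply, hv θ hθ, smul_smul])
  set f : ℝ → V := fun t => Real.exp (-(t * θmax)) • NormedSpace.exp (t • A) w with hf
  have hfsum : ∀ t, f t = ∑ θ ∈ s, Real.exp (t * (θ - θmax)) • v θ := by
    intro t
    rw [hf]
    simp only
    rw [hexp, Finset.smul_sum]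
    refine Finset.sum_congr rfl fun θ hθ => ?_
    rw [smul_smul, ← Real.exp_add]
    ring_nf
  have hlim : Filter.Tendsto f Filter.atTop (nhds (v θmax)) := by
    have key : Filter.Tendsto (fun t => ∑ θ ∈ s, Real.exp (t * (θ - θmax)) • v θ)
        Filter.atTop (nhds (∑ θ ∈ s, (if θ = θmax then (1:ℝ) else 0) • v θ)) := by
      refine tendsto_finset_sum _ fun θ hθ => ?_
      by_cases h : θ = θmax
      · subst h
        simpa using (tendsto_const_nhds :
          Filter.Tendsto (fun _ : ℝ => v θ) Filter.atTop (nhds (v θ)))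
      · have hneg : θ - θmax < 0 := sub_neg.mpr (lt_of_le_of_ne (hle θ hθ) h)
        simp only [if_neg h, zero_smul]
        have h0 : Filter.Tendsto (fun t : ℝ => Real.exp (t * (θ - θmax)))
            Filter.atTop (nhds 0) :=
          Real.tendsto_exp_atBot.comp (Filter.tendsto_id.atTop_mul_const_of_neg hneg)
        simpa using h0.smul_const (v θ)
    have hsum_eq : ∑ θ ∈ s, (if θ = θmax then (1:ℝ) else 0) • v θ = v θmax := by
      rw [Finset.sum_eq_single_of_mem θmax hmem]
      · simp
      · intro θ hθ hne
        simp [if_neg hne]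
    rw [hsum_eq] at key
    have : (fun t => ∑ θ ∈ s, Real.exp (t * (θ - θmax)) • v θ) = f :=
      funext fun t => (hfsum t).symm
    rwa [this] at key
  have hwne : w ≠ 0 := by
    intro h0
    have hz : Filter.Tendsto f Filter.atTop (nhds 0) := by
      have : f = fun _ => (0 : V) := by
        funext t
        rw [hf]
        simp [h0]
      rw [this]
      exact tendsto_const_nhds
    exact hvmax (tendsto_nhds_unique hlim hz)
  have hfC : ∀ t : ℝ, ∃ g ∈ G, ∃ c : ℝ, c ≠ 0 ∧ c • (g w) = f t := by
    intro t
    obtain ⟨g, hg, hgw⟩ := hflow t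
    exact ⟨g, hg, Real.exp (-(t * θmax)), Real.exp_ne_zero _, by rw [hgw w]⟩
  have hfne : ∀ t : ℝ, f t ≠ 0 := by
    intro t
    obtain ⟨g, hg, c, hc, hcg⟩ := hfC t
    rw [← hcg]
    exact smul_ne_zero hc (by simpa using g.map_ne_zero_iff.mpr hwne)
  have hFlim : Filter.Tendsto (fun t => (⟨f t, hfne t⟩ : {u : V // u ≠ 0}))
      Filter.atTop (nhds ⟨v θmax, hvmax⟩) := by
    rw [tendsto_subtype_rng]
    exact hlim
  have hmemC : (⟨v θmax, hvmax⟩ : {u : V // u ≠ 0}) ∈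
      (fun x : {u : V // u ≠ 0} => (x : V)) ⁻¹' C := by
    refine hclosed.mem_of_tendsto hFlim (Filter.Eventually.of_forall fun t => ?_)
    simp only [Set.mem_preimage, hC, Set.mem_setOf_eq]
    exact hfC t
  simpa [hC] using hmemC
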